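/- For every positive integer t ≥ 1, gcd(2^(2t+1) - 1, 2^t + 3) = 1. -/

import Mathlib

lemma aux_pow_mod (t : ℕ) : 2 ^ (2 * t + 1) % 17 ≠ 1 := by
  induction t using Nat.strong_induction_on with
  | _ t ih =>
    match t with
    | 0 => decide
    | 1 => decide
    | 2 => decide
    | 3 => decide
    | (n+4) =>
      have h := ih n (by omega)
      have he : 2 ^ (2 * (n + 4) + 1) = 2 ^ (2 * n + 1) * 256 := by ring
      rw [he, Nat.mul_mod]
      simpa using h

theorem gcd_two_pow_odd (t : ℕ) (ht : 1 ≤ t) :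
    Nat.gcd (2 ^ (2 * t + 1) - 1) (2 ^ t + 3) = 1 := by
  set d := Nat.gcd (2 ^ (2 * t + 1) - 1) (2 ^ t + 3) with hd
  have hp : 1 ≤ 2 ^ (2 * t + 1) := Nat.one_le_two_pow
  have h1 : d ∣ 2 ^ (2 * t + 1) - 1 := Nat.gcd_dvd_left _ _
  have h2 : d ∣ 2 ^ t + 3 := Nat.gcd_dvd_right _ _
  have h1' : (d : ℤ) ∣ 2 ^ (2 * t + 1) - 1 := by
    have := Int.natCast_dvd_natCast.mpr h1
    push_cast [hp] at this
    exact this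
  have h2' : (d : ℤ) ∣ 2 ^ t + 3 := by exact_mod_cast Int.natCast_dvd_natCast.mpr h2
  have h17 : (d : ℤ) ∣ 17 := by
    have key : (17 : ℤ) = ((2:ℤ) ^ (2 * t + 1) - 1) + 12 * (2 ^ t + 3)
        - 2 * (2 ^ t + 3) ^ 2 := by ring
    rw [key]
    exact dvd_sub (dvd_add h1' (Dvd.dvd.mul_left h2' 12))
      ((dvd_pow h2' two_ne_zero).mul_left 2)
  have h17' : d ∣ 17 := Int.ofNat_dvd.mp (by exact_mod_cast h17)
  have haux := aux_pow_mod t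
  have hdpos : 0 < d := Nat.gcd_pos_of_pos_right _ (by positivity)
  have hle : d ≤ 17 := Nat.le_of_dvd (by norm_num) h17'
  interval_cases d <;> omega
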